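/- Let p be a prime with p > 3. Then the binomial coefficient C(2p-1, p-1) is congruent to 1 modulo p^3 (Wolstenholme's congruence). -/

import Mathlib

open Finset

/-- Product of identity over `Ioc 0 n` is `n!`. -/
lemma wols_prod_Ioc (n : ℕ) : (∏ x ∈ Ioc 0 n, x) = Nat.factorial n := by
  induction n with
  | zero => simp
  | succ n ih => rw [Finset.prod_Ioc_succ_top (Nat.zero_le _), ih, Nat.factorial_succ, mul_comm]

/-- Uniqueness of inverses in ZMod. -/
lemma wols_inv_eq {n : ℕ} {a b : ZMod n} (ha : IsUnit a) (h : a * b = 1) : a⁻¹ = b := by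
  calc a⁻¹ = a⁻¹ * (a * b) := by rw [h, mul_one]
  _ = (a⁻¹ * a) * b := by ring
  _ = b := by rw [ZMod.inv_mul_of_unit a ha, one_mul]

lemma wols_unit {p : ℕ} (hp : p.Prime) (j k : ℕ) (h1 : 1 ≤ k) (h2 : k < p) :
    IsUnit ((k : ℕ) : ZMod (p ^ j)) := by
  rw [ZMod.isUnit_iff_coprime]
  exact Nat.Coprime.pow_right _ ((Nat.coprime_comm).1 ((hp.coprime_iff_not_dvd).2
    (Nat.not_dvd_of_pos_of_lt h1 h2)))

lemma wols_inv_eq' {n : ℕ} {a b : ZMod n} (ha : IsUnit a) (h : a * b = 1) : a⁻¹ = b := by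
  calc a⁻¹ = a⁻¹ * (a * b) := by rw [h, mul_one]
  _ = (a⁻¹ * a) * b := by ring
  _ = b := by rw [ZMod.inv_mul_of_unit a ha, one_mul]

lemma wols_mul_cast_zero {n a b : ℕ} [NeZero n] (hb : b ∣ n) (hab : n ∣ a * b)
    (x : ZMod n) (h : ZMod.castHom hb (ZMod b) x = 0) : (a : ZMod n) * x = 0 := by
  have hx : ((x.val : ℕ) : ZMod b) = 0 := by
    rwa [ZMod.natCast_val, ← ZMod.castHom_apply (h := hb)]
  obtain ⟨t, ht⟩ := (ZMod.natCast_eq_zero_iff _ _).1 hx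
  have : x = ((x.val : ℕ) : ZMod n) := (ZMod.natCast_rightInverse x).symm
  rw [this, ← Nat.cast_mul, ht, ZMod.natCast_eq_zero_iff]
  exact hab.trans ⟨t, by ring⟩

lemma wols_cast_inv {n b : ℕ} (hb : b ∣ n) (k : ℕ)
    (hn : IsUnit ((k : ℕ) : ZMod n)) (hbk : IsUnit ((k : ℕ) : ZMod b)) :
    ZMod.castHom hb (ZMod b) (((k : ℕ) : ZMod n)⁻¹) = ((k : ℕ) : ZMod b)⁻¹ := by
  symm
  apply wols_inv_eq' hbk
  have := congrArg (ZMod.castHom hb (ZMod b)) (ZMod.mul_inv_of_unit _ hn)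
  rwa [map_mul, map_one, map_natCast] at this

lemma wols_prod_one_add {R : Type*} [CommRing R] {ι : Type*} (s : Finset ι) (x : ι → R)
    (h : ∀ i ∈ s, ∀ j ∈ s, x i * x j = 0) :
    (∏ i ∈ s, (1 + x i)) = 1 + ∑ i ∈ s, x i := by
  classical
  induction s using Finset.cons_induction with
  | empty => simp
  | cons a s ha ih =>
    rw [Finset.prod_cons, Finset.sum_cons,
      ih (fun i hi j hj => h i (mem_cons_of_mem hi) j (mem_cons_of_mem hj))]
    have hzero : x a * ∑ i ∈ s, x i = 0 := by
      rw [Finset.mul_sum]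
      exact Finset.sum_eq_zero fun i hi =>
        h a (mem_cons_self a s) i (mem_cons_of_mem hi)
    linear_combination (1:R) * hzero

@[to_additive]
lemma wols_prod_pair {M : Type*} [CommMonoid M] (m : ℕ) (f : ℕ → M) :
    (∏ k ∈ Icc 1 (2 * m), f k) = ∏ k ∈ Icc 1 m, (f k * f (2 * m + 1 - k)) := by
  have h1 : (∏ k ∈ Ioc 0 m, f k) * (∏ k ∈ Ioc m (2*m), f k) = ∏ k ∈ Ioc 0 (2*m), f k :=
    Finset.prod_Ioc_consecutive f (Nat.zero_le m) (by omega)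
  have h2 : (∏ k ∈ Ioc m (2*m), f k) = ∏ k ∈ Ioc 0 m, f (2*m+1-k) := by
    apply Finset.prod_nbij' (fun k => 2*m+1-k) (fun k => 2*m+1-k)
    · intro a ha; simp only [mem_Ioc] at *; omega
    · intro a ha; simp only [mem_Ioc] at *; omega
    · intro a ha; simp only [mem_Ioc] at ha; omega
    · intro a ha; simp only [mem_Ioc] at ha; omega
    · intro a ha; simp only [mem_Ioc] at ha; congr 1; omega
  have e0 : Icc 1 (2*m) = Ioc 0 (2*m) := Finset.Icc_add_one_left_eq_Ioc 0 (2*m)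
  have e1 : Icc 1 m = Ioc 0 m := Finset.Icc_add_one_left_eq_Ioc 0 m
  rw [e0, e1, ← h1, h2, ← Finset.prod_mul_distrib]

/-- sum of squares over ZMod p vanishes for p > 3 -/
lemma wols_sum_sq {p : ℕ} [Fact p.Prime] (hp3 : 3 < p) :
    (∑ x : ZMod p, x ^ 2) = 0 := by
  have h2 : (2 : ZMod p) ≠ 0 := by
    intro h
    have h' : ((2 : ℕ) : ZMod p) = 0 := by push_cast; exact h
    have := Nat.le_of_dvd (by norm_num) ((ZMod.natCast_eq_zero_iff 2 p).1 h')
    omega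
  have key : (∑ x : ZMod p, (2 * x) ^ 2) = ∑ x : ZMod p, x ^ 2 := by
    apply Fintype.sum_bijective (fun x : ZMod p => 2 * x)
      (Equiv.mulLeft₀ (2 : ZMod p) h2).bijective
    intro x; rfl
  have h3 : (3 : ZMod p) ≠ 0 := by
    intro h
    have h' : ((3 : ℕ) : ZMod p) = 0 := by push_cast; exact h
    have := Nat.le_of_dvd (by norm_num) ((ZMod.natCast_eq_zero_iff 3 p).1 h')
    omega
  have : (3 : ZMod p) * ∑ x : ZMod p, x ^ 2 = 0 := by
    have e : ∀ x : ZMod p, (2*x)^2 = 4 * x^2 := fun x => by ring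
    simp only [e, ← Finset.mul_sum] at key
    linear_combination key
  exact (mul_eq_zero.mp this).resolve_left h3

section D
variable {p : ℕ} [hpf : Fact p.Prime]

lemma wols_cast_sub (k : ℕ) (hk : k ≤ p) : (((p - k : ℕ) : ZMod p)) = -(k : ZMod p) := by
  have : ((p - k : ℕ) + k : ℕ) = p := by omega
  have h2 : (((p - k : ℕ) + k : ℕ) : ZMod p) = ((p : ℕ) : ZMod p) := by rw [this]
  rw [Nat.cast_add, ZMod.natCast_self] at h2
  linear_combination h2

lemma wols_sum_inv_sq (hp3 : 3 < p) :
    (∑ k ∈ Icc 1 (p - 1), ((k : ZMod p)⁻¹) ^ 2) = 0 := by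
  have h0 : (∑ k ∈ range p, ((k : ZMod p)⁻¹) ^ 2) = ∑ x : ZMod p, (x⁻¹) ^ 2 := by
    refine Finset.sum_nbij' (fun k => ((k : ZMod p))) (fun x => x.val) ?_ ?_ ?_ ?_ ?_
    · intro a _; exact mem_univ _
    · intro x _; simp only [mem_range]; exact ZMod.val_lt x
    · intro a ha; simp only [mem_range] at ha; exact ZMod.val_cast_of_lt ha
    · intro x _; exact ZMod.natCast_rightInverse x
    · intro a _; rfl
  have h1 : (∑ x : ZMod p, (x⁻¹) ^ 2) = ∑ x : ZMod p, x ^ 2 := by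
    apply Fintype.sum_bijective (fun x : ZMod p => x⁻¹) _ _ _ (fun x => rfl)
    exact Function.Involutive.bijective (fun x => inv_inv x)
  have h2 : range p = insert 0 (Icc 1 (p - 1)) := by
    ext a
    simp only [mem_range, mem_insert, mem_Icc]
    omega
  rw [h2, Finset.sum_insert (by simp)] at h0
  simp only [Nat.cast_zero, inv_zero, ne_eq, OfNat.ofNat_ne_zero, not_false_eq_true,
    zero_pow, zero_add] at h0
  rw [h0, h1, wols_sum_sq hp3]

lemma wols_half_sum_inv_sq (hp3 : 3 < p) {m : ℕ} (hm : p = 2 * m + 1) :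
    (∑ k ∈ Icc 1 m, ((k : ZMod p)⁻¹) ^ 2) = 0 := by
  have h2 : (2 : ZMod p) ≠ 0 := by
    intro h
    have h' : ((2 : ℕ) : ZMod p) = 0 := by push_cast; exact h
    have := Nat.le_of_dvd (by norm_num) ((ZMod.natCast_eq_zero_iff 2 p).1 h')
    omega
  have key := wols_sum_pair m (fun k => ((k : ZMod p)⁻¹) ^ 2)
  have h3 : (∑ k ∈ Icc 1 m, (((k : ZMod p)⁻¹) ^ 2 + (((2*m+1-k : ℕ) : ZMod p)⁻¹) ^ 2))
      = ∑ k ∈ Icc 1 m, 2 * ((k : ZMod p)⁻¹) ^ 2 := by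
    apply Finset.sum_congr rfl
    intro k hk
    simp only [mem_Icc] at hk
    have : (((2*m+1-k : ℕ) : ZMod p)) = -(k : ZMod p) := by
      rw [← hm]; exact wols_cast_sub k (by omega)
    rw [this, inv_neg]
    ring
  rw [h3, ← Finset.mul_sum] at key
  have h4 : p - 1 = 2 * m := by omega
  rw [← h4] at key
  rw [wols_sum_inv_sq hp3] at key
  exact (mul_eq_zero.mp key.symm).resolve_left h2

lemma wols_T_zero (hp3 : 3 < p) {m : ℕ} (hm : p = 2 * m + 1) :
    (∑ k ∈ Icc 1 m, (k : ZMod p)⁻¹ * ((p - k : ℕ) : ZMod p)⁻¹) = 0 := by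
  have h : ∀ k ∈ Icc 1 m, (k : ZMod p)⁻¹ * ((p - k : ℕ) : ZMod p)⁻¹
      = -(((k : ZMod p)⁻¹) ^ 2) := by
    intro k hk
    simp only [mem_Icc] at hk
    rw [wols_cast_sub k (by omega), inv_neg]
    ring
  rw [Finset.sum_congr rfl h]
  have := wols_half_sum_inv_sq hp3 hm
  simp only [Finset.sum_neg_distrib, this, neg_zero]
end D

theorem wolstenholme_congruence (p : ℕ) (hp : p.Prime) (hp3 : 3 < p) :
    (2 * p - 1).choose (p - 1) ≡ 1 [MOD p ^ 3] := by
  haveI : Fact p.Prime := ⟨hp⟩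
  haveI : NeZero (p ^ 3) := ⟨pow_ne_zero 3 hp.pos.ne'⟩
  obtain ⟨m, hmo⟩ := hp.odd_of_ne_two (by omega)
  have hm : p = 2 * m + 1 := by omega
  have hm2 : 2 ≤ m := by omega
  set C := (2 * p - 1).choose (p - 1) with hC
  -- Step 1 : C * (p-1)! = ∏_{k=1}^{p-1} (p+k)  in ℕ
  have key : C * Nat.factorial (p - 1) = ∏ k ∈ Icc 1 (p - 1), (p + k) := by
    have h1 : C * Nat.factorial (p - 1) * Nat.factorial p = Nat.factorial (2 * p - 1) := by
      have := Nat.choose_mul_factorial_mul_factorial (n := 2 * p - 1) (k := p - 1) (by omega)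
      have hsub : 2 * p - 1 - (p - 1) = p := by omega
      rwa [hsub] at this
    have h2 : Nat.factorial p * (∏ k ∈ Icc 1 (p - 1), (p + k)) = Nat.factorial (2 * p - 1) := by
      have ha : (∏ k ∈ Ioc 0 p, k) * (∏ k ∈ Ioc p (2 * p - 1), k) = ∏ k ∈ Ioc 0 (2 * p - 1), k :=
        Finset.prod_Ioc_consecutive _ (Nat.zero_le p) (by omega)
      have hb : (∏ k ∈ Ioc p (2 * p - 1), k) = ∏ k ∈ Icc 1 (p - 1), (p + k) := by
        symm
        apply Finset.prod_nbij' (fun k => p + k) (fun k => k - p)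
        · intro a ha'; simp only [mem_Ioc, mem_Icc] at *; omega
        · intro a ha'; simp only [mem_Ioc, mem_Icc] at *; omega
        · intro a ha'; simp only [mem_Icc] at ha'; omega
        · intro a ha'; simp only [mem_Ioc] at ha'; omega
        · intro a ha'; rfl
      rw [hb] at ha
      rwa [wols_prod_Ioc, wols_prod_Ioc] at ha
    apply Nat.eq_of_mul_eq_mul_left (Nat.factorial_pos p)
    calc Nat.factorial p * (C * Nat.factorial (p - 1))
        = C * Nat.factorial (p - 1) * Nat.factorial p := by ring
      _ = Nat.factorial (2 * p - 1) := h1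
      _ = Nat.factorial p * ∏ k ∈ Icc 1 (p - 1), (p + k) := h2.symm
  -- notation
  set Z := ZMod (p ^ 3) with hZ
  have hdvd1 : p ∣ p ^ 3 := ⟨p ^ 2, by ring⟩
  -- units
  have hu3 : ∀ k : ℕ, 1 ≤ k → k < p → IsUnit ((k : ℕ) : Z) := fun k h1 h2 =>
    wols_unit hp 3 k h1 h2
  have hu1 : ∀ k : ℕ, 1 ≤ k → k < p → IsUnit ((k : ℕ) : ZMod p) := fun k h1 h2 => by
    have := wols_unit hp 1 k h1 h2
    rwa [pow_one] at this
  -- Step 2 : cast to ZMod p^3 and cancel (p-1)!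
  have hcast : (C : Z) * ((Nat.factorial (p - 1) : ℕ) : Z)
      = ∏ k ∈ Icc 1 (p - 1), ((p : Z) + (k : Z)) := by
    have := congrArg (fun t : ℕ => ((t : ℕ) : Z)) key
    push_cast [Z] at this ⊢
    exact this
  have hfacprod : (∏ k ∈ Icc 1 (p - 1), ((k : ℕ) : Z)) = ((Nat.factorial (p - 1) : ℕ) : Z) := by
    simp only [Z]
    rw [← Nat.cast_prod]
    congr 1
    rw [← wols_prod_Ioc, ← Finset.Icc_add_one_left_eq_Ioc, zero_add]
  have hsplit : (∏ k ∈ Icc 1 (p - 1), ((p : Z) + (k : Z)))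
      = ((Nat.factorial (p - 1) : ℕ) : Z) * ∏ k ∈ Icc 1 (p - 1), (1 + (p : Z) * (k : Z)⁻¹) := by
    rw [← hfacprod, ← Finset.prod_mul_distrib]
    apply Finset.prod_congr rfl
    intro k hk
    simp only [mem_Icc] at hk
    have hku : IsUnit ((k : ℕ) : Z) := hu3 k hk.1 (by omega)
    have : ((k : ℕ) : Z) * ((k : ℕ) : Z)⁻¹ = 1 := ZMod.mul_inv_of_unit _ hku
    rw [mul_add, mul_one]
    rw [mul_comm ((p:Z)) (((k:ℕ):Z)⁻¹), ← mul_assoc, this, one_mul, add_comm]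
  have hfacu : IsUnit ((Nat.factorial (p - 1) : ℕ) : Z) := by
    rw [ZMod.isUnit_iff_coprime]
    refine Nat.Coprime.pow_right _ ?_
    exact Nat.coprime_comm.1 ((hp.coprime_iff_not_dvd).2 (fun hd =>
      by have := (Nat.Prime.dvd_factorial hp).1 hd; omega))
  have hCG : (C : Z) = ∏ k ∈ Icc 1 (p - 1), (1 + (p : Z) * (k : Z)⁻¹) := by
    apply IsUnit.mul_left_cancel hfacu
    rw [mul_comm _ (C : Z), hcast, hsplit]
  -- Step 3 : pair k with p - k
  have hpair : (∏ k ∈ Icc 1 (p - 1), (1 + (p : Z) * (k : Z)⁻¹))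
      = ∏ k ∈ Icc 1 m, ((1 + (p : Z) * (k : Z)⁻¹) * (1 + (p : Z) * (((p - k : ℕ) : Z))⁻¹)) := by
    have h1 : p - 1 = 2 * m := by omega
    rw [h1, wols_prod_pair m (fun k => 1 + (p : Z) * ((k : ℕ) : Z)⁻¹)]
    apply Finset.prod_congr rfl
    intro k hk
    have : 2 * m + 1 - k = p - k := by omega
    rw [this]
  -- Step 4 : each paired factor is 1 + 2 p² w k
  have hfactor : ∀ k ∈ Icc 1 m,
      (1 + (p : Z) * (k : Z)⁻¹) * (1 + (p : Z) * (((p - k : ℕ) : Z))⁻¹)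
      = 1 + 2 * (p : Z) ^ 2 * ((k : Z)⁻¹ * (((p - k : ℕ) : Z))⁻¹) := by
    intro k hk
    simp only [mem_Icc] at hk
    have hk1 : ((k : ℕ) : Z) * ((k : ℕ) : Z)⁻¹ = 1 :=
      ZMod.mul_inv_of_unit _ (hu3 k hk.1 (by omega))
    have hk2 : (((p - k : ℕ) : ℕ) : Z) * (((p - k : ℕ) : ℕ) : Z)⁻¹ = 1 :=
      ZMod.mul_inv_of_unit _ (hu3 (p - k) (by omega) (by omega))
    have hsum : (((p - k : ℕ) : ℕ) : Z) + ((k : ℕ) : Z) = (p : Z) := by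
      have : ((p - k : ℕ) + k : ℕ) = p := by omega
      have := congrArg (fun t : ℕ => ((t : ℕ) : Z)) this
      push_cast at this
      exact this
    linear_combination (-(p:Z) * ((k : ℕ) : Z)⁻¹) * hk2
      + (-(p:Z) * (((p - k : ℕ) : ℕ) : Z)⁻¹) * hk1
      + ((p:Z) * ((k : ℕ) : Z)⁻¹ * (((p - k : ℕ) : ℕ) : Z)⁻¹) * hsum
  -- Step 5 : expand the product
  have hp4 : ((p : Z)) ^ 4 = 0 := by
    have : (((p ^ 4 : ℕ) : ℕ) : Z) = 0 :=
      (ZMod.natCast_eq_zero_iff _ _).2 ⟨p, by ring⟩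
    push_cast at this
    exact this
  have hexp : (∏ k ∈ Icc 1 m,
        (1 + 2 * (p : Z) ^ 2 * ((k : Z)⁻¹ * (((p - k : ℕ) : Z))⁻¹)))
      = 1 + ∑ k ∈ Icc 1 m, 2 * (p : Z) ^ 2 * ((k : Z)⁻¹ * (((p - k : ℕ) : Z))⁻¹) := by
    apply wols_prod_one_add
    intro i _ j _
    have : (2 * (p : Z) ^ 2 * ((i : Z)⁻¹ * (((p - i : ℕ) : Z))⁻¹))
        * (2 * (p : Z) ^ 2 * ((j : Z)⁻¹ * (((p - j : ℕ) : Z))⁻¹))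
        = (p : Z) ^ 4 * (4 * ((i : Z)⁻¹ * (((p - i : ℕ) : Z))⁻¹)
          * ((j : Z)⁻¹ * (((p - j : ℕ) : Z))⁻¹)) := by ring
    rw [this, hp4, zero_mul]
  -- Step 6 : the remaining sum vanishes
  have hW : ((p : Z)) ^ 2 * (∑ k ∈ Icc 1 m, ((k : Z)⁻¹ * (((p - k : ℕ) : Z))⁻¹)) = 0 := by
    have hab : p ^ 3 ∣ p ^ 2 * p := ⟨1, by ring⟩
    have hcastW : ZMod.castHom hdvd1 (ZMod p)
        (∑ k ∈ Icc 1 m, ((k : Z)⁻¹ * (((p - k : ℕ) : Z))⁻¹)) = 0 := by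
      rw [map_sum]
      rw [show (0 : ZMod p) = ∑ k ∈ Icc 1 m, ((k : ZMod p)⁻¹ * (((p - k : ℕ) : ZMod p))⁻¹)
        from (wols_T_zero hp3 hm).symm]
      apply Finset.sum_congr rfl
      intro k hk
      simp only [mem_Icc] at hk
      rw [map_mul,
        wols_cast_inv hdvd1 k (hu3 k hk.1 (by omega)) (hu1 k hk.1 (by omega)),
        wols_cast_inv hdvd1 (p - k) (hu3 (p - k) (by omega) (by omega))
          (hu1 (p - k) (by omega) (by omega))]
    have := wols_mul_cast_zero hdvd1 hab _ hcastW
    push_cast at this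
    exact this
  -- assemble
  have hfin : (C : Z) = 1 := by
    rw [hCG, hpair, Finset.prod_congr rfl hfactor, hexp]
    have : (∑ k ∈ Icc 1 m, 2 * (p : Z) ^ 2 * ((k : Z)⁻¹ * (((p - k : ℕ) : Z))⁻¹))
        = 2 * ((p : Z) ^ 2 * ∑ k ∈ Icc 1 m, ((k : Z)⁻¹ * (((p - k : ℕ) : Z))⁻¹)) := by
      simp only [Z, Finset.mul_sum]
      apply Finset.sum_congr rfl
      intro k _
      ring
    rw [this, hW, mul_zero, add_zero]
  have : ((C : ℕ) : ZMod (p ^ 3)) = ((1 : ℕ) : ZMod (p ^ 3)) := by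
    rw [Nat.cast_one]; exact hfin
  exact (ZMod.natCast_eq_natCast_iff _ _ _).1 this
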